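/- arXiv:2101.00251 — 3 statements merged into one kernel-verified Lean document; each statement's English description precedes it below -/
import Mathlib

section
/- Let u : ℝ × [0,∞) → ℝ be of class C⁴ with u_xx(x,t) ≠ 0 at every point, and suppose u satisfies u_t(x,t)·u_xx(x,t) = (1/2)·u_x(x,t)² at every point. Then the local risk tolerance r(x,t) := −u_x(x,t)/u_xx(x,t) solves the fast diffusion equation r_t(x,t) + (1/2)·r(x,t)²·r_xx(x,t) = 0 at every point, with initial datum r(x,0) = −u_x(x,0)/u_xx(x,0). -/
/-- Partial derivative in the first (wealth) argument. -/
noncomputable def pderivX (u : ℝ → ℝ → ℝ) (x t : ℝ) : ℝ := deriv (fun x' => u x' t) x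

/-- Partial derivative in the second (time) argument. -/
noncomputable def pderivT (u : ℝ → ℝ → ℝ) (x t : ℝ) : ℝ := deriv (fun t' => u x t') t

/-- The local risk tolerance `r = -u_x / u_xx` of a utility `u`. -/
noncomputable def riskTol (u : ℝ → ℝ → ℝ) (x t : ℝ) : ℝ :=
  -(pderivX u x t) / pderivX (pderivX u) x t

lemma hasDerivAt_slice_X {E : Type*} [NormedAddCommGroup E] [NormedSpace ℝ E]
    {F : ℝ × ℝ → E} {x t : ℝ} (hF : DifferentiableAt ℝ F (x, t)) :
    HasDerivAt (fun x' => F (x', t)) (fderiv ℝ F (x, t) (1, 0)) x := by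
  have h : HasDerivAt (fun x' : ℝ => ((x', t) : ℝ × ℝ)) (1, 0) x :=
    HasDerivAt.prodMk (hasDerivAt_id x) (hasDerivAt_const x t)
  exact hF.hasFDerivAt.comp_hasDerivAt x h

lemma hasDerivAt_slice_T {E : Type*} [NormedAddCommGroup E] [NormedSpace ℝ E]
    {F : ℝ × ℝ → E} {x t : ℝ} (hF : DifferentiableAt ℝ F (x, t)) :
    HasDerivAt (fun t' => F (x, t')) (fderiv ℝ F (x, t) (0, 1)) t := by
  have h : HasDerivAt (fun t' : ℝ => ((x, t') : ℝ × ℝ)) (0, 1) t :=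
    HasDerivAt.prodMk (hasDerivAt_const t x) (hasDerivAt_id t)
  exact hF.hasFDerivAt.comp_hasDerivAt t h

lemma hasDerivAt_pderivX {f : ℝ → ℝ → ℝ} {x t : ℝ}
    (hf : DifferentiableAt ℝ (fun p : ℝ × ℝ => f p.1 p.2) (x, t)) :
    HasDerivAt (fun x' => f x' t) (pderivX f x t) x :=
  (hasDerivAt_slice_X hf).differentiableAt.hasDerivAt

lemma hasDerivAt_pderivT {f : ℝ → ℝ → ℝ} {x t : ℝ}
    (hf : DifferentiableAt ℝ (fun p : ℝ × ℝ => f p.1 p.2) (x, t)) :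
    HasDerivAt (fun t' => f x t') (pderivT f x t) t :=
  (hasDerivAt_slice_T hf).differentiableAt.hasDerivAt

lemma contDiff_pderivX {f : ℝ → ℝ → ℝ} {m n : WithTop ℕ∞}
    (hf : ContDiff ℝ m (fun p : ℝ × ℝ => f p.1 p.2)) (h : n + 1 ≤ m) :
    ContDiff ℝ n (fun p : ℝ × ℝ => pderivX f p.1 p.2) := by
  have hd : Differentiable ℝ (fun p : ℝ × ℝ => f p.1 p.2) :=
    hf.differentiable (zero_lt_one.trans_le (le_trans (le_add_self) h)).ne'
  have he : (fun p : ℝ × ℝ => pderivX f p.1 p.2)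
      = fun p : ℝ × ℝ => fderiv ℝ (fun q : ℝ × ℝ => f q.1 q.2) p (1, 0) := by
    funext p
    exact ((hasDerivAt_pderivX (hd p)).unique (hasDerivAt_slice_X (hd p)))
  rw [he]
  exact ((hf.of_le h).fderiv_right le_rfl).clm_apply contDiff_const

lemma contDiff_pderivT {f : ℝ → ℝ → ℝ} {m n : WithTop ℕ∞}
    (hf : ContDiff ℝ m (fun p : ℝ × ℝ => f p.1 p.2)) (h : n + 1 ≤ m) :
    ContDiff ℝ n (fun p : ℝ × ℝ => pderivT f p.1 p.2) := by
  have hd : Differentiable ℝ (fun p : ℝ × ℝ => f p.1 p.2) :=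
    hf.differentiable (zero_lt_one.trans_le (le_trans (le_add_self) h)).ne'
  have he : (fun p : ℝ × ℝ => pderivT f p.1 p.2)
      = fun p : ℝ × ℝ => fderiv ℝ (fun q : ℝ × ℝ => f q.1 q.2) p (0, 1) := by
    funext p
    exact ((hasDerivAt_pderivT (hd p)).unique (hasDerivAt_slice_T (hd p)))
  rw [he]
  exact ((hf.of_le h).fderiv_right le_rfl).clm_apply contDiff_const

lemma pderiv_swap {f : ℝ → ℝ → ℝ}
    (hf : ContDiff ℝ 2 (fun p : ℝ × ℝ => f p.1 p.2)) (x t : ℝ) :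
    pderivT (pderivX f) x t = pderivX (pderivT f) x t := by
  set F := fun p : ℝ × ℝ => f p.1 p.2 with hFdef
  have hFd : Differentiable ℝ F := hf.differentiable (by norm_num)
  have hG : ContDiff ℝ 1 (fderiv ℝ F) := hf.fderiv_right (by norm_num)
  have hGd : DifferentiableAt ℝ (fderiv ℝ F) (x, t) := (hG.differentiable one_ne_zero) _
  have hsym := second_derivative_symmetric (fun y => (hFd y).hasFDerivAt)
    hGd.hasFDerivAt ((1 : ℝ), (0 : ℝ)) ((0 : ℝ), (1 : ℝ))
  have hx : ∀ x' t' : ℝ, pderivX f x' t' = fderiv ℝ F (x', t') (1, 0) := fun x' t' =>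
    (hasDerivAt_pderivX (hFd (x', t'))).unique (hasDerivAt_slice_X (hFd (x', t')))
  have ht : ∀ x' t' : ℝ, pderivT f x' t' = fderiv ℝ F (x', t') (0, 1) := fun x' t' =>
    (hasDerivAt_pderivT (hFd (x', t'))).unique (hasDerivAt_slice_T (hFd (x', t')))
  have h1 : pderivT (pderivX f) x t = fderiv ℝ (fderiv ℝ F) (x, t) (0, 1) (1, 0) := by
    have hc : HasDerivAt (fun t' => fderiv ℝ F (x, t'))
        (fderiv ℝ (fderiv ℝ F) (x, t) (0, 1)) t :=
      hasDerivAt_slice_T hGd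
    have h2 := hc.clm_apply (hasDerivAt_const t ((1 : ℝ), (0 : ℝ)))
    simp only [map_zero, add_zero] at h2
    have h3 : (fun t' => pderivX f x t') = fun t' => fderiv ℝ F (x, t') (1, 0) :=
      funext fun t' => hx x t'
    show deriv (fun t' => pderivX f x t') t = _
    rw [h3]
    exact h2.deriv
  have h4 : pderivX (pderivT f) x t = fderiv ℝ (fderiv ℝ F) (x, t) (1, 0) (0, 1) := by
    have hc : HasDerivAt (fun x' => fderiv ℝ F (x', t))
        (fderiv ℝ (fderiv ℝ F) (x, t) (1, 0)) x :=
      hasDerivAt_slice_X hGd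
    have h2 := hc.clm_apply (hasDerivAt_const x ((0 : ℝ), (1 : ℝ)))
    simp only [map_zero, add_zero] at h2
    have h3 : (fun x' => pderivT f x' t) = fun x' => fderiv ℝ F (x', t) (0, 1) :=
      funext fun x' => ht x' t
    show deriv (fun x' => pderivT f x' t) x = _
    rw [h3]
    exact h2.deriv
  rw [h1, h4, hsym]

/-- **Fast diffusion equation for the local risk tolerance.**
If `u` is `C⁴` with `u_xx ≠ 0` on `ℝ × [0,∞)` and satisfies `u_t · u_xx = (1/2) · u_x²`,
then the local risk tolerance `r = -u_x/u_xx` solves `r_t + (1/2) · r² · r_xx = 0`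
with initial datum `r(x,0) = -u_x(x,0)/u_xx(x,0)`. -/
theorem fast_diffusion_equation (u : ℝ → ℝ → ℝ)
    (hu : ContDiff ℝ 4 (fun p : ℝ × ℝ => u p.1 p.2))
    (hne : ∀ x t : ℝ, 0 ≤ t → pderivX (pderivX u) x t ≠ 0)
    (hpde : ∀ x t : ℝ, 0 ≤ t →
      pderivT u x t * pderivX (pderivX u) x t = (1/2) * (pderivX u x t)^2) :
    (∀ x t : ℝ, 0 ≤ t →
      pderivT (riskTol u) x t
        + (1/2) * (riskTol u x t)^2 * pderivX (pderivX (riskTol u)) x t = 0)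
    ∧ (∀ x : ℝ, riskTol u x 0 = -(pderivX u x 0) / pderivX (pderivX u) x 0) := by
  refine ⟨?_, fun x => rfl⟩
  intro x t ht
  -- regularity of the partial derivatives (as functions on the plane)
  have hA : ContDiff ℝ 3 (fun p : ℝ × ℝ => pderivX u p.1 p.2) :=
    contDiff_pderivX hu (by norm_num)
  have hB : ContDiff ℝ 2 (fun p : ℝ × ℝ => pderivX (pderivX u) p.1 p.2) :=
    contDiff_pderivX hA (by norm_num)
  have hC : ContDiff ℝ 1 (fun p : ℝ × ℝ => pderivX (pderivX (pderivX u)) p.1 p.2) :=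
    contDiff_pderivX hB (by norm_num)
  have hW : ContDiff ℝ 3 (fun p : ℝ × ℝ => pderivT u p.1 p.2) :=
    contDiff_pderivT hu (by norm_num)
  have hWx : ContDiff ℝ 2 (fun p : ℝ × ℝ => pderivX (pderivT u) p.1 p.2) :=
    contDiff_pderivX hW (by norm_num)
  have hAd : Differentiable ℝ (fun p : ℝ × ℝ => pderivX u p.1 p.2) :=
    hA.differentiable (by norm_num)
  have hBd : Differentiable ℝ (fun p : ℝ × ℝ => pderivX (pderivX u) p.1 p.2) :=
    hB.differentiable (by norm_num)
  have hCd : Differentiable ℝ (fun p : ℝ × ℝ => pderivX (pderivX (pderivX u)) p.1 p.2) :=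
    hC.differentiable (by norm_num)
  have hWd : Differentiable ℝ (fun p : ℝ × ℝ => pderivT u p.1 p.2) :=
    hW.differentiable (by norm_num)
  have hWxd : Differentiable ℝ (fun p : ℝ × ℝ => pderivX (pderivT u) p.1 p.2) :=
    hWx.differentiable (by norm_num)
  -- slice derivatives in the x-direction at time t
  have hA' : ∀ x' : ℝ, HasDerivAt (fun x'' => pderivX u x'' t)
      (pderivX (pderivX u) x' t) x' := fun x' => hasDerivAt_pderivX (hAd (x', t))
  have hB' : ∀ x' : ℝ, HasDerivAt (fun x'' => pderivX (pderivX u) x'' t)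
      (pderivX (pderivX (pderivX u)) x' t) x' := fun x' => hasDerivAt_pderivX (hBd (x', t))
  have hC' : ∀ x' : ℝ, HasDerivAt (fun x'' => pderivX (pderivX (pderivX u)) x'' t)
      (pderivX (pderivX (pderivX (pderivX u))) x' t) x' :=
    fun x' => hasDerivAt_pderivX (hCd (x', t))
  have hW' : ∀ x' : ℝ, HasDerivAt (fun x'' => pderivT u x'' t)
      (pderivX (pderivT u) x' t) x' := fun x' => hasDerivAt_pderivX (hWd (x', t))
  have hWx' : ∀ x' : ℝ, HasDerivAt (fun x'' => pderivX (pderivT u) x'' t)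
      (pderivX (pderivX (pderivT u)) x' t) x' := fun x' => hasDerivAt_pderivX (hWxd (x', t))
  -- slice derivatives in the t-direction
  have hAt : HasDerivAt (fun t' => pderivX u x t') (pderivT (pderivX u) x t) t :=
    hasDerivAt_pderivT (hAd (x, t))
  have hBt : HasDerivAt (fun t' => pderivX (pderivX u) x t') (pderivT (pderivX (pderivX u)) x t) t :=
    hasDerivAt_pderivT (hBd (x, t))
  -- Clairaut
  have e1 : ∀ x' t' : ℝ, pderivT (pderivX u) x' t' = pderivX (pderivT u) x' t' :=
    fun x' t' => pderiv_swap (hu.of_le (by norm_num)) x' t'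
  have e2 : pderivT (pderivX (pderivX u)) x t = pderivX (pderivX (pderivT u)) x t := by
    rw [pderiv_swap (hA.of_le (by norm_num)) x t]
    show deriv (fun x' => pderivT (pderivX u) x' t) x
      = deriv (fun x' => pderivX (pderivT u) x' t) x
    congr 1
    funext x'
    exact e1 x' t
  -- the PDE along the slice at time t
  have h0 : ∀ x' : ℝ, pderivT u x' t * pderivX (pderivX u) x' t
      = 1/2 * pderivX u x' t ^ 2 := fun x' => hpde x' t ht
  -- first x-derivative of the PDE
  have I1 : ∀ x' : ℝ, pderivX (pderivT u) x' t * pderivX (pderivX u) x' t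
      + pderivT u x' t * pderivX (pderivX (pderivX u)) x' t
      = pderivX u x' t * pderivX (pderivX u) x' t := by
    intro x'
    have hL := (hW' x').mul (hB' x')
    have hR := ((hA' x').pow 2).const_mul (1/2 : ℝ)
    have hfun : (fun x'' => pderivT u x'' t * pderivX (pderivX u) x'' t)
        = fun x'' => 1/2 * pderivX u x'' t ^ 2 := funext h0
    change HasDerivAt (fun x'' => pderivT u x'' t * pderivX (pderivX u) x'' t) _ x' at hL
    rw [hfun] at hL
    have huniq := hL.unique hR
    rw [huniq]
    norm_num
    ring
  -- second x-derivative of the PDE (at x)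
  have I2 : pderivX (pderivX (pderivT u)) x t * pderivX (pderivX u) x t
        + pderivX (pderivT u) x t * pderivX (pderivX (pderivX u)) x t
      + (pderivX (pderivT u) x t * pderivX (pderivX (pderivX u)) x t
        + pderivT u x t * pderivX (pderivX (pderivX (pderivX u))) x t)
      = pderivX (pderivX u) x t * pderivX (pderivX u) x t
        + pderivX u x t * pderivX (pderivX (pderivX u)) x t := by
    have hL := ((hWx' x).mul (hB' x)).add ((hW' x).mul (hC' x))
    have hR := (hA' x).mul (hB' x)
    have hfun : (fun x' => pderivX (pderivT u) x' t * pderivX (pderivX u) x' t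
        + pderivT u x' t * pderivX (pderivX (pderivX u)) x' t)
        = fun x' => pderivX u x' t * pderivX (pderivX u) x' t := funext I1
    change HasDerivAt (fun x' => pderivX (pderivT u) x' t * pderivX (pderivX u) x' t
        + pderivT u x' t * pderivX (pderivX (pderivX u)) x' t) _ x at hL
    rw [hfun] at hL
    exact hL.unique hR
  have hb : pderivX (pderivX u) x t ≠ 0 := hne x t ht
  -- time derivative of the risk tolerance
  have hrT : pderivT (riskTol u) x t
      = (-(pderivT (pderivX u) x t) * pderivX (pderivX u) x t
        - -(pderivX u x t) * pderivT (pderivX (pderivX u)) x t)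
        / pderivX (pderivX u) x t ^ 2 :=
    ((hAt.neg).div hBt hb).deriv
  rw [e1 x t, e2] at hrT
  -- first x-derivative of the risk tolerance, along the whole slice
  have hrx : ∀ x' : ℝ, pderivX (riskTol u) x' t
      = (-(pderivX (pderivX u) x' t) * pderivX (pderivX u) x' t
        - -(pderivX u x' t) * pderivX (pderivX (pderivX u)) x' t)
        / pderivX (pderivX u) x' t ^ 2 :=
    fun x' => (((hA' x').neg).div (hB' x') (hne x' t ht)).deriv
  -- second x-derivative of the risk tolerance
  have hbp : pderivX (pderivX u) x t ^ 2 ≠ 0 := pow_ne_zero _ hb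
  have hnum := (((hB' x).neg).mul (hB' x)).sub (((hA' x).neg).mul (hC' x))
  have hden := (hB' x).pow 2
  have hfun2 : (fun x' => pderivX (riskTol u) x' t) = (fun x' =>
      (-(pderivX (pderivX u) x' t) * pderivX (pderivX u) x' t
        - -(pderivX u x' t) * pderivX (pderivX (pderivX u)) x' t)
        / pderivX (pderivX u) x' t ^ 2) := funext hrx
  have hrxx := (hnum.div hden hbp).deriv
  change deriv (fun x' =>
      (-(pderivX (pderivX u) x' t) * pderivX (pderivX u) x' t
        - -(pderivX u x' t) * pderivX (pderivX (pderivX u)) x' t)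
        / pderivX (pderivX u) x' t ^ 2) x = _ at hrxx
  simp only [Pi.neg_apply, Pi.mul_apply, Pi.sub_apply, Pi.pow_apply, Pi.div_apply] at hrxx
  rw [← hfun2] at hrxx
  -- put everything together
  rw [show pderivX (pderivX (riskTol u)) x t
      = deriv (fun x' => pderivX (riskTol u) x' t) x from rfl, hrxx, hrT,
    show riskTol u x t = -(pderivX u x t) / pderivX (pderivX u) x t from rfl]
  set a := pderivX u x t with ha
  set b := pderivX (pderivX u) x t with hbb
  set c := pderivX (pderivX (pderivX u)) x t with hc
  set d := pderivX (pderivX (pderivX (pderivX u))) x t with hd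
  set w := pderivT u x t with hww
  set wx := pderivX (pderivT u) x t with hwx
  set wxx := pderivX (pderivX (pderivT u)) x t with hwxx
  have h2b : (2 : ℝ) * b ≠ 0 := mul_ne_zero two_ne_zero hb
  have hw2 : w = a ^ 2 / (2 * b) := by
    rw [eq_div_iff h2b]; linear_combination 2 * h0 x
  have hwx2 : wx = (a * b - w * c) / b := by
    rw [eq_div_iff hb]; linear_combination I1 x
  have hwxx2 : wxx = (b * b + a * c - wx * c - (wx * c + w * d)) / b := by
    rw [eq_div_iff hb]; linear_combination I2
  rw [hwxx2, hwx2, hw2]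
  field_simp
  ring
end

section
/- Let α > 0 and β > 0 be constants. The function r(x,t) = √(α·x² + β·e^{−α·t}) defined on ℝ × [0,∞) solves the fast diffusion equation r_t(x,t) + (1/2)·r(x,t)²·r_xx(x,t) = 0 at every point, with initial datum r(x,0) = √(α·x² + β). -/
/-- The asymptotically linear local risk tolerance `r(x,t) = √(α·x² + β·e^{-α·t})`. -/
noncomputable def asympLinRiskTol (α β x t : ℝ) : ℝ :=
  Real.sqrt (α * x^2 + β * Real.exp (-α * t))

/-- **Asymptotically linear risk tolerances solve the fast diffusion equation.**
For `α, β > 0`, the function `r(x,t) = √(α·x² + β·e^{-α·t})` solves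
`r_t + (1/2) · r² · r_xx = 0` on `ℝ × [0,∞)`, with `r(x,0) = √(α·x² + β)`. -/
theorem asympLin_solves_fast_diffusion (α β : ℝ) (hα : 0 < α) (hβ : 0 < β) :
    (∀ x t : ℝ, 0 ≤ t →
      pderivT (asympLinRiskTol α β) x t
        + (1/2) * (asympLinRiskTol α β x t)^2
          * pderivX (pderivX (asympLinRiskTol α β)) x t = 0)
    ∧ (∀ x : ℝ, asympLinRiskTol α β x 0 = Real.sqrt (α * x^2 + β)) := by
  constructor
  · intro x t _
    set c := β * Real.exp (-α * t) with hc
    have hcpos : 0 < c := mul_pos hβ (Real.exp_pos _)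
    have hg : ∀ y : ℝ, 0 < α * y ^ 2 + c := fun y => by positivity
    have hgs : ∀ y : ℝ, 0 < Real.sqrt (α * y ^ 2 + c) := fun y => Real.sqrt_pos.2 (hg y)
    -- x-derivative of r at any point y
    have hdx : ∀ y : ℝ, HasDerivAt (fun x' => Real.sqrt (α * x' ^ 2 + c))
        (α * y / Real.sqrt (α * y ^ 2 + c)) y := by
      intro y
      have h1 : HasDerivAt (fun x' : ℝ => α * x' ^ 2 + c) (α * (2 * y)) y := by
        simpa using ((hasDerivAt_pow 2 y).const_mul α).add_const c
      have h2 := h1.sqrt (ne_of_gt (hg y))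
      convert h2 using 1
      field_simp
    -- identify the first partial derivative as a function
    have hpx : (fun x' => pderivX (asympLinRiskTol α β) x' t)
        = fun x' => α * x' / Real.sqrt (α * x' ^ 2 + c) := by
      funext y
      have := (hdx y).deriv
      simpa [pderivX, asympLinRiskTol, hc] using this
    -- second x-derivative
    set s := Real.sqrt (α * x ^ 2 + c) with hs
    have hspos : 0 < s := hgs x
    have hs2 : s ^ 2 = α * x ^ 2 + c := Real.sq_sqrt (hg x).le
    have hdxx : HasDerivAt (fun x' => α * x' / Real.sqrt (α * x' ^ 2 + c))
        ((α * s - (α * x) * (α * x / s)) / s ^ 2) x := by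
      have hnum : HasDerivAt (fun x' : ℝ => α * x') α x := by
        simpa using (hasDerivAt_id x).const_mul α
      exact hnum.div (hdx x) (ne_of_gt hspos)
    -- time derivative
    have hdt : HasDerivAt (fun t' => asympLinRiskTol α β x t')
        ((β * (Real.exp (-α * t) * (-α))) / (2 * s)) t := by
      have hinner : HasDerivAt (fun t' : ℝ => -α * t') (-α) t := by
        simpa using (hasDerivAt_id t).const_mul (-α)
      have h1 : HasDerivAt (fun t' : ℝ => α * x ^ 2 + β * Real.exp (-α * t'))
          (β * (Real.exp (-α * t) * (-α))) t := (hinner.exp.const_mul β).const_add (α * x ^ 2)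
      have h2 := h1.sqrt (by rw [← hc]; exact ne_of_gt (hg x))
      simpa [asympLinRiskTol, hs, hc] using h2
    -- assemble
    have e1 : pderivT (asympLinRiskTol α β) x t = (β * (Real.exp (-α * t) * (-α))) / (2 * s) :=
      hdt.deriv
    have e2 : pderivX (pderivX (asympLinRiskTol α β)) x t
        = (α * s - (α * x) * (α * x / s)) / s ^ 2 := by
      unfold pderivX
      rw [show (fun x' => deriv (fun x'' => asympLinRiskTol α β x'' t) x')
          = fun x' => α * x' / Real.sqrt (α * x' ^ 2 + c) from hpx]
      exact hdxx.deriv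
    have e3 : (asympLinRiskTol α β x t) ^ 2 = α * x ^ 2 + c := by
      rw [asympLinRiskTol, ← hc, ← hs]; exact hs2
    rw [e1, e2, e3]
    have hsne : s ≠ 0 := ne_of_gt hspos
    have hc' : c = β * Real.exp (-(α * t)) := by rw [hc, neg_mul]
    field_simp
    linear_combination (-(α*s^2))*(hc - hc') + (α^2*x^2)*(hc + hs2)
  · intro x
    simp [asympLinRiskTol]
end

section
/- Let β > 0, M > 0 and N ∈ ℝ, and define on ℝ × [0,∞) the function u(x,t) = (M/2)·( log( x + √(x² + β·e^{−t}) ) − (e^{t}/β)·x·( x − √(x² + β·e^{−t}) ) − t/2 ) + N. Then u satisfies the partial differential equation u_t(x,t)·u_xx(x,t) = (1/2)·u_x(x,t)² at every point, and its local risk tolerance is −u_x(x,t)/u_xx(x,t) = √(x² + β·e^{−t}) for all (x,t) ∈ ℝ × [0,∞). -/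
/-- The forward utility corresponding (for `α = 1`) to the asymptotically linear
local risk tolerance `r(x,t) = √(x² + β·e^{-t})`. -/
noncomputable def forwardUtilityAlphaOne (β M N x t : ℝ) : ℝ :=
  M / 2 * (Real.log (x + Real.sqrt (x^2 + β * Real.exp (-t)))
      - (Real.exp t / β) * x * (x - Real.sqrt (x^2 + β * Real.exp (-t)))
      - t / 2)
    + N

lemma sqrtX_hasDerivAt (c x : ℝ) (hc : 0 < c) :
    HasDerivAt (fun x' : ℝ => Real.sqrt (x'^2 + c)) (x / Real.sqrt (x^2 + c)) x := by
  have h := ((hasDerivAt_pow 2 x).add_const c).sqrt (by positivity)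
  convert h using 1
  have hs : Real.sqrt (x^2 + c) ≠ 0 := by positivity
  field_simp; ring

lemma xs_pos (c x : ℝ) (hc : 0 < c) : 0 < x + Real.sqrt (x^2 + c) := by
  have h1 : Real.sqrt (x^2) < Real.sqrt (x^2 + c) :=
    Real.sqrt_lt_sqrt (by positivity) (by linarith)
  rw [Real.sqrt_sq_eq_abs] at h1
  have := neg_abs_le x
  linarith

lemma uX (β M N t : ℝ) (hβ : 0 < β) (x : ℝ) :
    HasDerivAt (fun x' => forwardUtilityAlphaOne β M N x' t)
      (M / (x + Real.sqrt (x^2 + β * Real.exp (-t)))) x := by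
  set c := β * Real.exp (-t) with hcdef
  have hc : 0 < c := by positivity
  set s := Real.sqrt (x^2 + c) with hsdef
  have hs : 0 < s := by positivity
  have hs2 : s^2 = x^2 + c := Real.sq_sqrt (by positivity)
  have hxs : 0 < x + s := xs_pos c x hc
  set E := Real.exp t / β with hEdef
  have hE : E * c = 1 := by
    rw [hEdef, hcdef, Real.exp_neg]
    field_simp
  have hsd := sqrtX_hasDerivAt c x hc
  have h1 : HasDerivAt (fun x' => Real.log (x' + Real.sqrt (x'^2 + c)))
      ((1 + x / s) / (x + s)) x := ((hasDerivAt_id x).add hsd).log hxs.ne'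
  have h2 : HasDerivAt (fun x' => E * x' * (x' - Real.sqrt (x'^2 + c)))
      (E * 1 * (x - s) + E * x * (1 - x / s)) x :=
    (((hasDerivAt_id x).const_mul E).mul ((hasDerivAt_id x).sub hsd))
  have h := (((h1.sub h2).sub_const (t / 2)).const_mul (M / 2)).add_const N
  refine h.congr_deriv (Eq.symm ?_)
  have hβ' : β ≠ 0 := hβ.ne'
  clear_value E s c
  field_simp
  linear_combination (-M*E*(s-x))*hs2 + (-M*(s-x))*hE

lemma uXX (M c : ℝ) (hc : 0 < c) (x : ℝ) :
    HasDerivAt (fun x' => M / (x' + Real.sqrt (x'^2 + c)))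
      (-M / (Real.sqrt (x^2 + c) * (x + Real.sqrt (x^2 + c)))) x := by
  set s := Real.sqrt (x^2 + c) with hsdef
  have hs : 0 < s := by positivity
  have hxs : 0 < x + s := xs_pos c x hc
  have hsd := sqrtX_hasDerivAt c x hc
  have h := (hasDerivAt_const x M).div ((hasDerivAt_id x).add hsd) hxs.ne'
  refine h.congr_deriv (Eq.symm ?_)
  simp only [Pi.add_apply, id_eq, ← hsdef]
  clear_value s
  field_simp
  ring

lemma uT (β M N x : ℝ) (hβ : 0 < β) (t : ℝ) :
    HasDerivAt (fun t' => M / 2 * (Real.log (x + Real.sqrt (x^2 + β * Real.exp (-t')))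
      - (Real.exp t' / β) * x * (x - Real.sqrt (x^2 + β * Real.exp (-t')))
      - t' / 2) + N)
      (-M * Real.sqrt (x^2 + β * Real.exp (-t)) / (2 * (x + Real.sqrt (x^2 + β * Real.exp (-t))))) t := by
  have hc : 0 < β * Real.exp (-t) := by positivity
  set c := β * Real.exp (-t) with hcdef
  set s := Real.sqrt (x^2 + c) with hsdef
  have hs : 0 < s := by positivity
  have hs2 : s^2 = x^2 + c := Real.sq_sqrt (by positivity)
  have hxs : 0 < x + s := xs_pos c x hc
  set E := Real.exp t / β with hEdef
  have hE : E * c = 1 := by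
    rw [hEdef, hcdef, Real.exp_neg]; field_simp
  have hin : HasDerivAt (fun t' => x^2 + β * Real.exp (-t'))
      (β * (Real.exp (-t) * (-1))) t := by
    have he : HasDerivAt (fun t' : ℝ => Real.exp (-t')) (Real.exp (-t) * (-1)) t :=
      (Real.hasDerivAt_exp (-t)).comp t ((hasDerivAt_id t).neg)
    exact (he.const_mul β).const_add (x^2)
  have hstd : HasDerivAt (fun t' => Real.sqrt (x^2 + β * Real.exp (-t')))
      (β * (Real.exp (-t) * (-1)) / (2 * s)) t := hin.sqrt (by positivity)
  have hlog : HasDerivAt (fun t' => Real.log (x + Real.sqrt (x^2 + β * Real.exp (-t'))))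
      ((0 + β * (Real.exp (-t) * (-1)) / (2 * s)) / (x + s)) t :=
    ((hasDerivAt_const t x).add hstd).log hxs.ne'
  have hmid : HasDerivAt (fun t' => (Real.exp t' / β) * x * (x - Real.sqrt (x^2 + β * Real.exp (-t'))))
      ((Real.exp t / β) * x * (x - s)
        + (Real.exp t / β * x) * (0 - β * (Real.exp (-t) * (-1)) / (2 * s))) t := by
    have ha : HasDerivAt (fun t' => Real.exp t' / β * x) (Real.exp t / β * x) t :=
      ((Real.hasDerivAt_exp t).div_const β).mul_const x
    have hb : HasDerivAt (fun t' => x - Real.sqrt (x^2 + β * Real.exp (-t')))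
        (0 - β * (Real.exp (-t) * (-1)) / (2 * s)) t := (hasDerivAt_const t x).sub hstd
    exact ha.mul hb
  have h := (((hlog.sub hmid).sub ((hasDerivAt_id t).div_const 2)).const_mul (M/2)).add_const N
  refine h.congr_deriv (Eq.symm ?_)
  rw [show β * (Real.exp (-t) * -1) = -c by rw [hcdef]; ring, show Real.exp t / β = E from rfl]
  clear_value E s c
  field_simp
  linear_combination M*(-1 - 2*s*x*E)*hs2 + (-M*x*(s-x))*hE

/-- **Forward utility for `α = 1`.** For `β > 0`, `M > 0`, `N ∈ ℝ`, the function
`u(x,t) = (M/2)·(log(x + √(x² + β·e^{−t})) − (e^t/β)·x·(x − √(x² + β·e^{−t})) − t/2) + N`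
satisfies `u_t · u_xx = (1/2) · u_x²` on `ℝ × [0,∞)`, and its local risk tolerance is
`-u_x/u_xx = √(x² + β·e^{−t})`. -/
theorem forwardUtilityAlphaOne_forward (β M N : ℝ) (hβ : 0 < β) (hM : 0 < M) :
    ∀ x t : ℝ, 0 ≤ t →
      (pderivT (forwardUtilityAlphaOne β M N) x t
          * pderivX (pderivX (forwardUtilityAlphaOne β M N)) x t
        = (1/2) * (pderivX (forwardUtilityAlphaOne β M N) x t)^2)
      ∧ (-(pderivX (forwardUtilityAlphaOne β M N) x t)
            / pderivX (pderivX (forwardUtilityAlphaOne β M N)) x t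
          = Real.sqrt (x^2 + β * Real.exp (-t))) := by
  intro x t ht
  have hc : 0 < β * Real.exp (-t) := by positivity
  set c := β * Real.exp (-t) with hcdef
  set s := Real.sqrt (x^2 + c) with hsdef
  have hs : 0 < s := by positivity
  have hxs : 0 < x + s := xs_pos c x hc
  have hux : pderivX (forwardUtilityAlphaOne β M N) x t = M / (x + s) :=
    (uX β M N t hβ x).deriv
  have huxx : pderivX (pderivX (forwardUtilityAlphaOne β M N)) x t
      = -M / (s * (x + s)) := by
    have heq : (fun x' => pderivX (forwardUtilityAlphaOne β M N) x' t)
        = fun x' => M / (x' + Real.sqrt (x'^2 + c)) := by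
      funext x'
      exact (uX β M N t hβ x').deriv
    rw [show pderivX (pderivX (forwardUtilityAlphaOne β M N)) x t
        = deriv (fun x' => pderivX (forwardUtilityAlphaOne β M N) x' t) x from rfl, heq]
    exact (uXX M c hc x).deriv
  have hut : pderivT (forwardUtilityAlphaOne β M N) x t
      = -M * s / (2 * (x + s)) := by
    unfold pderivT forwardUtilityAlphaOne
    exact (uT β M N x hβ t).deriv
  rw [hux, huxx, hut]
  constructor
  · field_simp
  · field_simp
end
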